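/- In the higher tetrahedral algebra Λ = Λ(m,λ), any two paths of length 3 between two distinct vertices i ≠ j of Q are equal and non-zero in Λ. In particular, δηβ = δξσ = νμσ = νωβ (all paths of length 3 from vertex 1 to vertex 2 are equal). -/

import Mathlib

open scoped TensorProduct

namespace HigherTetrahedral

/-- The twelve arrows of the tetrahedral triangulation quiver. -/
inductive Arr : Type
  | nu | de | ep | rh | si | al | ga | be | xi | et | om | mu
  deriving DecidableEq

instance : Fintype Arr :=
  ⟨{.nu, .de, .ep, .rh, .si, .al, .ga, .be, .xi, .et, .om, .mu}, fun x => by cases x <;> decide⟩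

open Arr

/-- Source vertex of each arrow (vertex `v` is `⟨v-1⟩ : Fin 6`). -/
def src : Arr → Fin 6
  | nu => 0 | de => 0 | ep => 1 | rh => 1 | si => 2 | al => 2
  | ga => 3 | be => 3 | xi => 4 | et => 4 | om => 5 | mu => 5

/-- Target vertex of each arrow. -/
def tgt : Arr → Fin 6
  | nu => 5 | de => 4 | ep => 4 | rh => 5 | si => 1 | al => 0
  | ga => 0 | be => 1 | xi => 2 | et => 3 | om => 3 | mu => 2

/-- The permutation `f` of arrows, with orbits (δ η γ), (ε ξ σ), (ρ ω β), (ν μ α). -/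
def f : Arr → Arr
  | de => et | et => ga | ga => de
  | ep => xi | xi => si | si => ep
  | rh => om | om => be | be => rh
  | nu => mu | mu => al | al => nu

/-- The permutation `g`: `g θ` is the arrow starting at `tgt θ` other than `f θ`. -/
def g : Arr → Arr
  | de => xi | et => be | ga => nu
  | ep => et | xi => al | si => rh
  | rh => mu | om => ga | be => ep
  | nu => om | mu => si | al => de

variable (K : Type) [Field K]

/-- The ambient free algebra on the vertices and arrows. -/
abbrev FreeTet := FreeAlgebra K ((Fin 6) ⊕ Arr)

/-- Generator corresponding to a vertex. -/
def V (i : Fin 6) : FreeTet K := FreeAlgebra.ι K (Sum.inl i)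

/-- Generator corresponding to an arrow. -/
def A (θ : Arr) : FreeTet K := FreeAlgebra.ι K (Sum.inr θ)

variable (m : ℕ) (lam : K)

/-- The defining relations of the higher tetrahedral algebra `Λ(m,λ)`, together with
the path-algebra relations for the vertex idempotents. -/
inductive TetRel : FreeTet K → FreeTet K → Prop
  | idem (i j : Fin 6) : TetRel (V K i * V K j) (if i = j then V K i else 0)
  | sum_one : TetRel (∑ i : Fin 6, V K i) 1
  | src_tgt (θ : Arr) : TetRel (V K (src θ) * A K θ * V K (tgt θ)) (A K θ)
  | rel_ga : TetRel (A K ga * A K de)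
      (A K be * A K ep + lam • ((A K be * A K rh * A K om) ^ (m - 1) * (A K be * A K ep)))
  | rel_rh : TetRel (A K rh * A K om)
      (A K ep * A K et + lam • ((A K ep * A K xi * A K si) ^ (m - 1) * (A K ep * A K et)))
  | rel_xi : TetRel (A K xi * A K si)
      (A K et * A K be + lam • ((A K et * A K ga * A K de) ^ (m - 1) * (A K et * A K be)))
  | rel_de : TetRel (A K de * A K et) (A K nu * A K om)
  | rel_om : TetRel (A K om * A K be) (A K mu * A K si)
  | rel_si : TetRel (A K si * A K ep) (A K al * A K de)
  | rel_et : TetRel (A K et * A K ga) (A K xi * A K al)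
  | rel_be : TetRel (A K be * A K rh) (A K ga * A K nu)
  | rel_ep : TetRel (A K ep * A K xi) (A K rh * A K mu)
  | rel_nu : TetRel (A K nu * A K mu) (A K de * A K xi)
  | rel_mu : TetRel (A K mu * A K al) (A K om * A K ga)
  | rel_al : TetRel (A K al * A K nu) (A K si * A K rh)
  | zero_rel (θ : Arr) : TetRel
      ((A K θ * A K (f θ) * A K (f (f θ))) ^ (m - 1) * (A K θ * A K (f θ)) * A K (g (f θ))) 0

/-- The higher tetrahedral algebra `Λ(m,λ)`. -/
abbrev Tet := RingQuot (TetRel K m lam)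

/-- The idempotent of `Λ(m,λ)` at a vertex. -/
def e (i : Fin 6) : Tet K m lam := RingQuot.mkAlgHom K (TetRel K m lam) (V K i)

/-- The image in `Λ(m,λ)` of an arrow. -/
def a (θ : Arr) : Tet K m lam := RingQuot.mkAlgHom K (TetRel K m lam) (A K θ)

/-- The elements `X_i` (vertex `i+1` in the paper's numbering):
`X₁ = δηγ`, `X₂ = ρωβ`, `X₃ = ανμ`, `X₄ = γδη`, `X₅ = ηγδ`, `X₆ = ωβρ`. -/
def X : Fin 6 → Tet K m lam
  | 0 => a K m lam de * a K m lam et * a K m lam ga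
  | 1 => a K m lam rh * a K m lam om * a K m lam be
  | 2 => a K m lam al * a K m lam nu * a K m lam mu
  | 3 => a K m lam ga * a K m lam de * a K m lam et
  | 4 => a K m lam et * a K m lam ga * a K m lam de
  | 5 => a K m lam om * a K m lam be * a K m lam rh

/-- Product in `Λ(m,λ)` of a list of arrows (a path, read left to right). -/
def pathProd (l : List Arr) : Tet K m lam := (l.map (a K m lam)).prod

/-- `IsPath i j l` : the list of arrows `l` is a (composable) path from vertex `i`
to vertex `j`. -/
def IsPath (i j : Fin 6) (l : List Arr) : Prop :=
  l ≠ [] ∧ l.Chain' (fun x y => tgt x = src y) ∧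
    (∀ h : l ≠ [], src (l.head h) = i ∧ tgt (l.getLast h) = j)




variable (K : Type) [Field K] (m : ℕ) (lam : K)

lemma hrel {x y : FreeTet K} (h : TetRel K m lam x y) :
    RingQuot.mkAlgHom K (TetRel K m lam) x = RingQuot.mkAlgHom K (TetRel K m lam) y :=
  RingQuot.mkAlgHom_rel K h
lemma hde : a K m lam de * a K m lam et = a K m lam nu * a K m lam om := by
  simpa only [a, map_mul] using hrel K m lam (TetRel.rel_de)

lemma hom2 : a K m lam om * a K m lam be = a K m lam mu * a K m lam si := by
  simpa only [a, map_mul] using hrel K m lam (TetRel.rel_om)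

lemma hsi : a K m lam si * a K m lam ep = a K m lam al * a K m lam de := by
  simpa only [a, map_mul] using hrel K m lam (TetRel.rel_si)

lemma het : a K m lam et * a K m lam ga = a K m lam xi * a K m lam al := by
  simpa only [a, map_mul] using hrel K m lam (TetRel.rel_et)

lemma hbe : a K m lam be * a K m lam rh = a K m lam ga * a K m lam nu := by
  simpa only [a, map_mul] using hrel K m lam (TetRel.rel_be)

lemma hep : a K m lam ep * a K m lam xi = a K m lam rh * a K m lam mu := by
  simpa only [a, map_mul] using hrel K m lam (TetRel.rel_ep)

lemma hnu : a K m lam nu * a K m lam mu = a K m lam de * a K m lam xi := by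
  simpa only [a, map_mul] using hrel K m lam (TetRel.rel_nu)

lemma hmu : a K m lam mu * a K m lam al = a K m lam om * a K m lam ga := by
  simpa only [a, map_mul] using hrel K m lam (TetRel.rel_mu)

lemma hal : a K m lam al * a K m lam nu = a K m lam si * a K m lam rh := by
  simpa only [a, map_mul] using hrel K m lam (TetRel.rel_al)

lemma hga : a K m lam ga * a K m lam de = a K m lam be * a K m lam ep +
    lam • ((a K m lam be * a K m lam rh * a K m lam om) ^ (m - 1) * (a K m lam be * a K m lam ep)) := by
  simpa only [a, map_mul, map_add, map_smul, map_pow] using hrel K m lam (TetRel.rel_ga)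

lemma hrh : a K m lam rh * a K m lam om = a K m lam ep * a K m lam et +
    lam • ((a K m lam ep * a K m lam xi * a K m lam si) ^ (m - 1) * (a K m lam ep * a K m lam et)) := by
  simpa only [a, map_mul, map_add, map_smul, map_pow] using hrel K m lam (TetRel.rel_rh)

lemma hxi : a K m lam xi * a K m lam si = a K m lam et * a K m lam be +
    lam • ((a K m lam et * a K m lam ga * a K m lam de) ^ (m - 1) * (a K m lam et * a K m lam be)) := by
  simpa only [a, map_mul, map_add, map_smul, map_pow] using hrel K m lam (TetRel.rel_xi)

lemma hz (θ : Arr) :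
    (a K m lam θ * a K m lam (f θ) * a K m lam (f (f θ))) ^ (m - 1) *
      (a K m lam θ * a K m lam (f θ)) * a K m lam (g (f θ)) = 0 := by
  simpa only [a, map_mul, map_pow, map_zero] using hrel K m lam (TetRel.zero_rel θ)

lemma pow_shift {M : Type*} [Monoid M] (x w : M) (n : ℕ) :
    x * (w * x) ^ n = (x * w) ^ n * x := by
  induction n with
  | zero => simp
  | succ k ih =>
    rw [pow_succ', ← mul_assoc, ← mul_assoc x w x, mul_assoc (x * w) x, ih, ← mul_assoc,
      ← pow_succ']

lemma prefix_shuffle {M : Type*} [Monoid M] (p q r s : M) (n : ℕ) :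
    p * ((q * r * p) ^ n * (q * s)) = (p * q * r) ^ n * (p * q) * s := by
  have h := pow_shift p (q * r) n
  rw [← mul_assoc, h, ← mul_assoc p q r, mul_assoc _ p (q * s), ← mul_assoc p q s,
    ← mul_assoc]

lemma z0 : a K m lam de * ((a K m lam et * a K m lam ga * a K m lam de) ^ (m - 1) * (a K m lam et * a K m lam be)) = 0 := by
  rw [prefix_shuffle]; exact hz K m lam de

lemma z2 : a K m lam si * ((a K m lam ep * a K m lam xi * a K m lam si) ^ (m - 1) * (a K m lam ep * a K m lam et)) = 0 := by
  rw [prefix_shuffle]; exact hz K m lam si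

lemma z5 : a K m lam om * ((a K m lam be * a K m lam rh * a K m lam om) ^ (m - 1) * (a K m lam be * a K m lam ep)) = 0 := by
  rw [prefix_shuffle]; exact hz K m lam om

lemma z1 : ((a K m lam ep * a K m lam xi * a K m lam si) ^ (m - 1) * (a K m lam ep * a K m lam et)) * a K m lam ga = 0 := by
  calc ((a K m lam ep * a K m lam xi * a K m lam si) ^ (m - 1) * (a K m lam ep * a K m lam et)) * a K m lam ga
      = (a K m lam ep * a K m lam xi * a K m lam si) ^ (m - 1) * (a K m lam ep * (a K m lam et * a K m lam ga)) := by
        simp only [mul_assoc]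
    _ = ((a K m lam ep * a K m lam xi * a K m lam si) ^ (m - 1) * (a K m lam ep * a K m lam xi)) * a K m lam al := by
        rw [het]; simp only [mul_assoc]
    _ = 0 := hz K m lam ep

lemma z3 : ((a K m lam be * a K m lam rh * a K m lam om) ^ (m - 1) * (a K m lam be * a K m lam ep)) * a K m lam xi = 0 := by
  calc ((a K m lam be * a K m lam rh * a K m lam om) ^ (m - 1) * (a K m lam be * a K m lam ep)) * a K m lam xi
      = (a K m lam be * a K m lam rh * a K m lam om) ^ (m - 1) * (a K m lam be * (a K m lam ep * a K m lam xi)) := by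
        simp only [mul_assoc]
    _ = ((a K m lam be * a K m lam rh * a K m lam om) ^ (m - 1) * (a K m lam be * a K m lam rh)) * a K m lam mu := by
        rw [hep]; simp only [mul_assoc]
    _ = 0 := hz K m lam be

lemma z4 : ((a K m lam et * a K m lam ga * a K m lam de) ^ (m - 1) * (a K m lam et * a K m lam be)) * a K m lam rh = 0 := by
  calc ((a K m lam et * a K m lam ga * a K m lam de) ^ (m - 1) * (a K m lam et * a K m lam be)) * a K m lam rh
      = (a K m lam et * a K m lam ga * a K m lam de) ^ (m - 1) * (a K m lam et * (a K m lam be * a K m lam rh)) := by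
        simp only [mul_assoc]
    _ = ((a K m lam et * a K m lam ga * a K m lam de) ^ (m - 1) * (a K m lam et * a K m lam ga)) * a K m lam nu := by
        rw [hbe]; simp only [mul_assoc]
    _ = 0 := hz K m lam et

/-- Canonical length-3 path out of each vertex ending at a distinct vertex. -/
def canon : Fin 6 → Tet K m lam
  | 0 => a K m lam de * a K m lam et * a K m lam be
  | 1 => a K m lam ep * a K m lam et * a K m lam ga
  | 2 => a K m lam si * a K m lam ep * a K m lam et
  | 3 => a K m lam ga * a K m lam de * a K m lam xi
  | 4 => a K m lam et * a K m lam be * a K m lam rh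
  | 5 => a K m lam om * a K m lam be * a K m lam ep

lemma p0a : a K m lam de * a K m lam et * a K m lam be = canon K m lam 0 := rfl
lemma p0b : a K m lam de * a K m lam xi * a K m lam si = canon K m lam 0 := by
  show _ = a K m lam de * a K m lam et * a K m lam be
  rw [mul_assoc, hxi, mul_add, mul_smul_comm, z0, smul_zero, add_zero, ← mul_assoc]
lemma p0c : a K m lam nu * a K m lam mu * a K m lam si = canon K m lam 0 := by
  rw [hnu]; exact p0b K m lam
lemma p0d : a K m lam nu * a K m lam om * a K m lam be = canon K m lam 0 := by
  rw [← hde]; exact p0a K m lam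

lemma p1a : a K m lam ep * a K m lam et * a K m lam ga = canon K m lam 1 := rfl
lemma p1b : a K m lam ep * a K m lam xi * a K m lam al = canon K m lam 1 := by
  show _ = a K m lam ep * a K m lam et * a K m lam ga
  rw [mul_assoc, ← het, ← mul_assoc]
lemma p1c : a K m lam rh * a K m lam mu * a K m lam al = canon K m lam 1 := by
  rw [← hep]; exact p1b K m lam
lemma p1d : a K m lam rh * a K m lam om * a K m lam ga = canon K m lam 1 := by
  show _ = a K m lam ep * a K m lam et * a K m lam ga
  rw [hrh, add_mul, smul_mul_assoc, z1, smul_zero, add_zero]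

lemma p2a : a K m lam si * a K m lam ep * a K m lam et = canon K m lam 2 := rfl
lemma p2b : a K m lam al * a K m lam de * a K m lam et = canon K m lam 2 := by
  rw [← hsi]; exact p2a K m lam
lemma p2c : a K m lam si * a K m lam rh * a K m lam om = canon K m lam 2 := by
  show _ = a K m lam si * a K m lam ep * a K m lam et
  rw [mul_assoc, hrh, mul_add, mul_smul_comm, z2, smul_zero, add_zero, ← mul_assoc]
lemma p2d : a K m lam al * a K m lam nu * a K m lam om = canon K m lam 2 := by
  rw [hal]; exact p2c K m lam

lemma p3a : a K m lam ga * a K m lam de * a K m lam xi = canon K m lam 3 := rfl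
lemma p3b : a K m lam ga * a K m lam nu * a K m lam mu = canon K m lam 3 := by
  show _ = a K m lam ga * a K m lam de * a K m lam xi
  rw [mul_assoc, hnu, ← mul_assoc]
lemma p3c : a K m lam be * a K m lam ep * a K m lam xi = canon K m lam 3 := by
  show _ = a K m lam ga * a K m lam de * a K m lam xi
  rw [hga, add_mul, smul_mul_assoc, z3, smul_zero, add_zero]
lemma p3d : a K m lam be * a K m lam rh * a K m lam mu = canon K m lam 3 := by
  rw [mul_assoc, ← hep, ← mul_assoc]; exact p3c K m lam

lemma p4a : a K m lam et * a K m lam be * a K m lam rh = canon K m lam 4 := rfl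
lemma p4b : a K m lam et * a K m lam ga * a K m lam nu = canon K m lam 4 := by
  show _ = a K m lam et * a K m lam be * a K m lam rh
  rw [mul_assoc, ← hbe, ← mul_assoc]
lemma p4c : a K m lam xi * a K m lam si * a K m lam rh = canon K m lam 4 := by
  show _ = a K m lam et * a K m lam be * a K m lam rh
  rw [hxi, add_mul, smul_mul_assoc, z4, smul_zero, add_zero]
lemma p4d : a K m lam xi * a K m lam al * a K m lam nu = canon K m lam 4 := by
  rw [mul_assoc, hal, ← mul_assoc]; exact p4c K m lam

lemma p5a : a K m lam om * a K m lam be * a K m lam ep = canon K m lam 5 := rfl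
lemma p5c : a K m lam om * a K m lam ga * a K m lam de = canon K m lam 5 := by
  show _ = a K m lam om * a K m lam be * a K m lam ep
  rw [mul_assoc, hga, mul_add, mul_smul_comm, z5, smul_zero, add_zero, ← mul_assoc]
lemma p5b : a K m lam mu * a K m lam al * a K m lam de = canon K m lam 5 := by
  rw [hmu]; exact p5c K m lam
lemma p5d : a K m lam mu * a K m lam si * a K m lam ep = canon K m lam 5 := by
  rw [mul_assoc, hsi, ← mul_assoc]; exact p5b K m lam

/-! ### A truncated matrix representation, used to prove non-vanishing. -/

/-- The truncated polynomial ring `K[X]/(X⁴)`. -/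
abbrev Rq := Polynomial K ⧸ Ideal.span {(Polynomial.X : Polynomial K) ^ 4}

/-- The image of `X` in `K[X]/(X⁴)`. -/
noncomputable def tq : Rq K := Ideal.Quotient.mk _ Polynomial.X

lemma tq4 : tq K ^ 4 = 0 := by
  rw [tq, ← map_pow, Ideal.Quotient.eq_zero_iff_mem]
  exact Ideal.subset_span rfl

lemma tq_pow_eq_zero {n : ℕ} (h : 4 ≤ n) : tq K ^ n = 0 := by
  obtain ⟨k, rfl⟩ := Nat.exists_eq_add_of_le h
  rw [pow_add, tq4, zero_mul]

lemma tq3 : tq K ^ 3 ≠ 0 := by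
  intro h
  rw [tq, ← map_pow, Ideal.Quotient.eq_zero_iff_mem, Ideal.mem_span_singleton] at h
  have h4 : (Polynomial.X : Polynomial K) ^ 3 ≠ 0 := pow_ne_zero _ Polynomial.X_ne_zero
  have := Polynomial.natDegree_le_of_dvd h h4
  simp [Polynomial.natDegree_X_pow] at this

/-- The matrix representing an arrow. -/
noncomputable def MB (θ : Arr) : Matrix (Fin 6) (Fin 6) (Rq K) :=
  Matrix.single (src θ) (tgt θ) (tq K)

/-- The matrix representing a vertex idempotent. -/
noncomputable def MV (i : Fin 6) : Matrix (Fin 6) (Fin 6) (Rq K) :=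
  Matrix.single i i 1

lemma MBmul (x y : Arr) (h : tgt x = src y) :
    MB K x * MB K y = Matrix.single (src x) (tgt y) (tq K * tq K) := by
  rw [MB, MB, ← h, Matrix.single_mul_single_same]

lemma MV_sum : ∑ i : Fin 6, MV K i = 1 := by
  ext i j
  rw [Matrix.sum_apply]
  rw [Finset.sum_eq_single i (fun b _ hb => ?_) (fun hi => absurd (Finset.mem_univ i) hi)]
  · by_cases h : i = j
    · subst h
      rw [Matrix.one_apply_eq]
      exact Matrix.single_apply_same i i (1 : Rq K)
    · rw [Matrix.one_apply_ne h]
      exact Matrix.single_apply_of_ne _ _ _ _ _ (by tauto)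
  · exact Matrix.single_apply_of_ne _ _ _ _ _ (by tauto)

lemma diag_pow (i : Fin 6) (c : Rq K) (k : ℕ) :
    (Matrix.single i i c) ^ (k + 1) = Matrix.single i i (c ^ (k + 1)) := by
  induction k with
  | zero => simp
  | succ n ih => rw [pow_succ, ih, Matrix.single_mul_single_same, ← pow_succ]

lemma chain1 (θ : Arr) : tgt θ = src (f θ) := by cases θ <;> rfl
lemma chain2 (θ : Arr) : tgt (f θ) = src (f (f θ)) := by cases θ <;> rfl
lemma chain3 (θ : Arr) : tgt (f (f θ)) = src θ := by cases θ <;> rfl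
lemma chain4 (θ : Arr) : tgt (f θ) = src (g (f θ)) := by cases θ <;> rfl

/-- The lift of the representation to the free algebra. -/
noncomputable def FRep : FreeTet K →ₐ[K] Matrix (Fin 6) (Fin 6) (Rq K) :=
  FreeAlgebra.lift K (Sum.elim (MV K) (MB K))

lemma FRep_V (i : Fin 6) : FRep K (V K i) = MV K i := by
  simp [FRep, V, FreeAlgebra.lift_ι_apply]

lemma FRep_A (θ : Arr) : FRep K (A K θ) = MB K θ := by
  simp [FRep, A, FreeAlgebra.lift_ι_apply]

lemma scalar_zero (hm : 2 ≤ m) :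
    (tq K * tq K * tq K) ^ (m - 1) * (tq K * tq K) = 0 := by
  have : tq K * tq K * tq K = tq K ^ 3 := by ring
  rw [this, show tq K * tq K = tq K ^ 2 by ring, ← pow_mul, ← pow_add]
  exact tq_pow_eq_zero K (by omega)

lemma frel_image (hm : 2 ≤ m) (x y u v p q r : Arr)
    (hxy : tgt x = src y) (huv : tgt u = src v) (hpq : tgt p = src q) (hqr : tgt q = src r)
    (hrp : tgt r = src p) (hsu : src x = src u) (htv : tgt y = tgt v)
    (hsp : src u = src p) :
    MB K x * MB K y =
      MB K u * MB K v + lam • ((MB K p * MB K q * MB K r) ^ (m - 1) * (MB K u * MB K v)) := by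
  obtain ⟨k, hk⟩ := Nat.exists_eq_add_of_le hm
  rw [MBmul K x y hxy, MBmul K u v huv, MBmul K p q hpq]
  rw [show MB K r = Matrix.single (src r) (tgt r) (tq K) from rfl, ← hqr,
    Matrix.single_mul_single_same, hrp]
  rw [show m - 1 = k + 1 by omega, diag_pow]
  rw [show Matrix.single (src u) (tgt v) (tq K * tq K)
      = Matrix.single (src p) (tgt v) (tq K * tq K) by rw [hsp],
    Matrix.single_mul_single_same]
  have hz : (tq K * tq K * tq K) ^ (k + 1) * (tq K * tq K) = 0 := by
    rw [show k + 1 = m - 1 by omega]; exact scalar_zero K m hm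
  rw [hz, Matrix.single_zero, smul_zero, add_zero, hsu, htv, hsp]

lemma FRep_rel (hm : 2 ≤ m) : ∀ ⦃x y : FreeTet K⦄, TetRel K m lam x y → FRep K x = FRep K y := by
  intro x y h
  obtain ⟨k, hk⟩ := Nat.exists_eq_add_of_le hm
  induction h with
  | idem i j =>
    rw [map_mul, FRep_V, FRep_V, MV, MV]
    by_cases h : i = j
    · subst h; simp [Matrix.single_mul_single_same, FRep_V, MV]
    · rw [Matrix.single_mul_single_of_ne (h := h)]
      simp [h]
  | sum_one => rw [map_sum, map_one]; simp only [FRep_V]; exact MV_sum K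
  | src_tgt θ =>
    rw [map_mul, map_mul, FRep_V, FRep_V, FRep_A, MV, MV, MB,
      Matrix.single_mul_single_same, Matrix.single_mul_single_same, one_mul, mul_one]
  | rel_ga =>
    simp only [map_mul, map_add, map_smul, map_pow, FRep_A]
    exact frel_image K m lam hm ga de be ep be rh om rfl rfl rfl rfl rfl rfl rfl rfl
  | rel_rh =>
    simp only [map_mul, map_add, map_smul, map_pow, FRep_A]
    exact frel_image K m lam hm rh om ep et ep xi si rfl rfl rfl rfl rfl rfl rfl rfl
  | rel_xi =>
    simp only [map_mul, map_add, map_smul, map_pow, FRep_A]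
    exact frel_image K m lam hm xi si et be et ga de rfl rfl rfl rfl rfl rfl rfl rfl
  | rel_de => simp only [map_mul, FRep_A]; rw [MBmul K de et rfl, MBmul K nu om rfl]; rfl
  | rel_om => simp only [map_mul, FRep_A]; rw [MBmul K om be rfl, MBmul K mu si rfl]; rfl
  | rel_si => simp only [map_mul, FRep_A]; rw [MBmul K si ep rfl, MBmul K al de rfl]; rfl
  | rel_et => simp only [map_mul, FRep_A]; rw [MBmul K et ga rfl, MBmul K xi al rfl]; rfl
  | rel_be => simp only [map_mul, FRep_A]; rw [MBmul K be rh rfl, MBmul K ga nu rfl]; rfl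
  | rel_ep => simp only [map_mul, FRep_A]; rw [MBmul K ep xi rfl, MBmul K rh mu rfl]; rfl
  | rel_nu => simp only [map_mul, FRep_A]; rw [MBmul K nu mu rfl, MBmul K de xi rfl]; rfl
  | rel_mu => simp only [map_mul, FRep_A]; rw [MBmul K mu al rfl, MBmul K om ga rfl]; rfl
  | rel_al => simp only [map_mul, FRep_A]; rw [MBmul K al nu rfl, MBmul K si rh rfl]; rfl
  | zero_rel θ =>
    simp only [map_mul, map_pow, map_zero, FRep_A]
    rw [MBmul K θ (f θ) (chain1 θ)]
    rw [show MB K (f (f θ)) = Matrix.single (src (f (f θ))) (tgt (f (f θ))) (tq K)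
        from rfl, ← chain2 θ, Matrix.single_mul_single_same, chain3 θ]
    rw [show m - 1 = k + 1 by omega, diag_pow]
    rw [Matrix.single_mul_single_same]
    rw [show MB K (g (f θ)) = Matrix.single (src (g (f θ))) (tgt (g (f θ))) (tq K)
        from rfl, ← chain4 θ, Matrix.single_mul_single_same]
    have hz : (tq K * tq K * tq K) ^ (k + 1) * (tq K * tq K) * tq K = 0 := by
      rw [show k + 1 = m - 1 by omega, scalar_zero K m hm, zero_mul]
    rw [hz, Matrix.single_zero]

/-- The representation of `Λ(m,λ)` on `6×6` matrices over `K[X]/(X⁴)`. -/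
noncomputable def Rep (hm : 2 ≤ m) : Tet K m lam →ₐ[K] Matrix (Fin 6) (Fin 6) (Rq K) :=
  RingQuot.liftAlgHom K ⟨FRep K, FRep_rel K m lam hm⟩

lemma Rep_a (hm : 2 ≤ m) (θ : Arr) : Rep K m lam hm (a K m lam θ) = MB K θ := by
  rw [a, Rep, RingQuot.liftAlgHom_mkAlgHom_apply, FRep_A]

lemma triple_ne (hm : 2 ≤ m) (x y z : Arr) (h1 : tgt x = src y) (h2 : tgt y = src z) :
    a K m lam x * a K m lam y * a K m lam z ≠ 0 := by
  intro h
  have h' := congrArg (Rep K m lam hm) h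
  rw [map_mul, map_mul, map_zero, Rep_a, Rep_a, Rep_a, MBmul K x y h1] at h'
  rw [show MB K z = Matrix.single (src z) (tgt z) (tq K) from rfl, ← h2,
    Matrix.single_mul_single_same] at h'
  have h'' := congrFun (congrFun h' (src x)) (tgt z)
  rw [Matrix.single_apply_same] at h''
  have : tq K ^ 3 = 0 := by rw [show tq K ^ 3 = tq K * tq K * tq K by ring, h'']; rfl
  exact tq3 K this

lemma canon_ne (hm : 2 ≤ m) (i : Fin 6) : canon K m lam i ≠ 0 := by
  fin_cases i
  · exact triple_ne K m lam hm de et be rfl rfl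
  · exact triple_ne K m lam hm ep et ga rfl rfl
  · exact triple_ne K m lam hm si ep et rfl rfl
  · exact triple_ne K m lam hm ga de xi rfl rfl
  · exact triple_ne K m lam hm et be rh rfl rfl
  · exact triple_ne K m lam hm om be ep rfl rfl

set_option maxHeartbeats 2000000 in
lemma key (x y z : Arr) (h1 : tgt x = src y) (h2 : tgt y = src z) (hne : src x ≠ tgt z) :
    a K m lam x * a K m lam y * a K m lam z = canon K m lam (src x) := by
  cases x <;> cases y <;>
    first
    | exact absurd h1 (by decide)
    | (cases z <;>
        first
        | exact absurd h2 (by decide)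
        | exact absurd rfl hne
        | exact p0a K m lam | exact p0b K m lam | exact p0c K m lam | exact p0d K m lam
        | exact p1a K m lam | exact p1b K m lam | exact p1c K m lam | exact p1d K m lam
        | exact p2a K m lam | exact p2b K m lam | exact p2c K m lam | exact p2d K m lam
        | exact p3a K m lam | exact p3b K m lam | exact p3c K m lam | exact p3d K m lam
        | exact p4a K m lam | exact p4b K m lam | exact p4c K m lam | exact p4d K m lam
        | exact p5a K m lam | exact p5b K m lam | exact p5c K m lam | exact p5d K m lam)

lemma path3_eq_canon (hm : 2 ≤ m) (l : List Arr) (i j : Fin 6) (hij : i ≠ j)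
    (hp : IsPath i j l) (hlen : l.length = 3) : pathProd K m lam l = canon K m lam i := by
  obtain ⟨hne0, hch, hend⟩ := hp
  match l, hlen with
  | [x, y, z], _ =>
    obtain ⟨h1, hch2⟩ := List.isChain_cons_cons.mp hch
    obtain ⟨h2, -⟩ := List.isChain_cons_cons.mp hch2
    have hs : src x = i := (hend (by simp)).1
    have ht : tgt z = j := by
      have := (hend (by simp)).2
      simpa using this
    have hpp : pathProd K m lam [x, y, z] = a K m lam x * a K m lam y * a K m lam z := by
      simp only [pathProd, List.map_cons, List.map_nil, List.prod_cons, List.prod_nil,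
        mul_one, mul_assoc]
    rw [hpp, key K m lam x y z h1 h2 (by rw [hs, ht]; exact hij), hs]

end HigherTetrahedral


open HigherTetrahedral Arr in
/-- In `Λ(m,λ)`, any two paths of length `3` between two distinct vertices are equal
and non-zero; in particular `δηβ = δξσ = νμσ = νωβ`. -/
theorem paths_length_three (K : Type) [Field K] (m : ℕ) (hm : 2 ≤ m) (lam : K) :
    (∀ (i j : Fin 6), i ≠ j → ∀ l l' : List Arr,
      IsPath i j l → l.length = 3 → IsPath i j l' → l'.length = 3 →
        pathProd K m lam l = pathProd K m lam l' ∧ pathProd K m lam l ≠ 0) ∧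
    a K m lam de * a K m lam et * a K m lam be = a K m lam de * a K m lam xi * a K m lam si ∧
    a K m lam de * a K m lam xi * a K m lam si = a K m lam nu * a K m lam mu * a K m lam si ∧
    a K m lam nu * a K m lam mu * a K m lam si = a K m lam nu * a K m lam om * a K m lam be := by
  obtain ⟨k, hk⟩ := Nat.exists_eq_add_of_le hm
  refine ⟨?_, (p0a K m lam).trans (p0b K m lam).symm,
    (p0b K m lam).trans (p0c K m lam).symm, (p0c K m lam).trans (p0d K m lam).symm⟩
  intro i j hij l l' hp hlen hp' hlen'
  rw [path3_eq_canon K m lam hm l i j hij hp hlen,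
    path3_eq_canon K m lam hm l' i j hij hp' hlen']
  exact ⟨rfl, canon_ne K m lam hm i⟩
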